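/- Let n be a positive integer, η > 0 a real number, Π : Matrix (Fin n) (Fin n) ℝ a diagonal matrix with strictly positive diagonal entries, L̂ : Matrix (Fin n) (Fin n) ℝ a symmetric matrix such that η•Π + L̂ is positive definite, and Y : Matrix (Fin n) (Fin n) ℝ arbitrary. Define G(F) = (η/2) * trace((F − Y)ᵀ * Π * (F − Y)) + (1/2) * trace(Fᵀ * L̂ * F). Then F_v = η • (η•Π + L̂)⁻¹ * Π * Y is the unique minimizer of G over all F : Matrix (Fin n) (Fin n) ℝ, i.e., G(F_v) ≤ G(F) for every F, with equality only when F = F_v. -/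

import Mathlib

open Matrix

theorem mmcp_vertical_propagation_unique_minimizer
    (n : ℕ) (hn : 0 < n) (η : ℝ) (hη : 0 < η)
    (Pmat : Matrix (Fin n) (Fin n) ℝ)
    (hPmatdiag : Pmat.IsDiag) (hPmatpos : ∀ i, 0 < Pmat i i)
    (L : Matrix (Fin n) (Fin n) ℝ) (hLsymm : L.IsSymm)
    (hposdef : (η • Pmat + L).PosDef)
    (Y : Matrix (Fin n) (Fin n) ℝ)
    (G : Matrix (Fin n) (Fin n) ℝ → ℝ)
    (hG : ∀ F, G F = (η / 2) * ((F - Y)ᵀ * Pmat * (F - Y)).trace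
        + (1 / 2) * (Fᵀ * L * F).trace)
    (Fv : Matrix (Fin n) (Fin n) ℝ)
    (hFv : Fv = η • ((η • Pmat + L)⁻¹ * Pmat * Y)) :
    (∀ F, G Fv ≤ G F) ∧ (∀ F, G F = G Fv → F = Fv) := by
  set A := η • Pmat + L with hAdef
  have hPsymm : Pmatᵀ = Pmat := hPmatdiag.isSymm
  have hAsymm : Aᵀ = A := by
    simp [hAdef, Matrix.transpose_add, Matrix.transpose_smul, hPsymm, hLsymm.eq]
  have hdet : IsUnit A.det := isUnit_iff_ne_zero.2 hposdef.det_pos.ne'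
  have hAFv : A * Fv = η • (Pmat * Y) := by
    rw [hFv, Matrix.mul_smul, ← Matrix.mul_assoc, ← Matrix.mul_assoc,
      Matrix.mul_nonsing_inv _ hdet, Matrix.one_mul]
  -- trace of quadratic form in columns
  have trace_eq : ∀ D : Matrix (Fin n) (Fin n) ℝ,
      (Dᵀ * A * D).trace = ∑ j, (fun i => D i j) ⬝ᵥ A.mulVec (fun i => D i j) := by
    intro D
    simp only [Matrix.trace, Matrix.diag, Matrix.mul_apply, Matrix.transpose_apply,
      dotProduct, Matrix.mulVec, Finset.sum_mul, Finset.mul_sum]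
    apply Finset.sum_congr rfl; intro j _
    rw [Finset.sum_comm]
    apply Finset.sum_congr rfl; intro i _
    apply Finset.sum_congr rfl; intro k _
    ring
  have tr_nonneg : ∀ D : Matrix (Fin n) (Fin n) ℝ, 0 ≤ (Dᵀ * A * D).trace := by
    intro D
    rw [trace_eq]
    apply Finset.sum_nonneg
    intro j _
    have := hposdef.posSemidef.dotProduct_mulVec_nonneg (fun i => D i j)
    simpa using this
  have tr_zero : ∀ D : Matrix (Fin n) (Fin n) ℝ, (Dᵀ * A * D).trace = 0 → D = 0 := by
    intro D h
    rw [trace_eq] at h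
    have hzero : ∀ j ∈ Finset.univ, (fun i => D i j) ⬝ᵥ A.mulVec (fun i => D i j) = 0 := by
      apply (Finset.sum_eq_zero_iff_of_nonneg _).1 h
      intro j _
      have := hposdef.posSemidef.dotProduct_mulVec_nonneg (fun i => D i j)
      simpa using this
    ext i j
    by_contra hne
    have hcol : (fun i => D i j) ≠ 0 := by
      intro hc
      exact hne (by simpa using congrFun hc i)
    have := hposdef.dotProduct_mulVec_pos (x := fun i => D i j) hcol
    simp only [star_trivial] at this
    have h0 := hzero j (Finset.mem_univ j)
    linarith
  -- key identity
  have key : ∀ F, G F = G Fv + (1/2) * ((F - Fv)ᵀ * A * (F - Fv)).trace := by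
    intro F
    have e1 : (Fᵀ * (A * Fv)).trace = η * (Fᵀ * (Pmat * Y)).trace := by
      rw [hAFv, Matrix.mul_smul, Matrix.trace_smul]; simp
    have e2 : (Fvᵀ * (A * F)).trace = (Fᵀ * (A * Fv)).trace := by
      rw [← Matrix.trace_transpose (Fvᵀ * (A * F))]
      rw [Matrix.transpose_mul, Matrix.transpose_mul, Matrix.transpose_transpose, hAsymm,
        Matrix.mul_assoc]
    have e3 : (Fvᵀ * (A * Fv)).trace = η * (Fvᵀ * (Pmat * Y)).trace := by
      rw [hAFv, Matrix.mul_smul, Matrix.trace_smul]; simp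
    have e4 : (Yᵀ * (Pmat * F)).trace = (Fᵀ * (Pmat * Y)).trace := by
      rw [← Matrix.trace_transpose (Yᵀ * (Pmat * F))]
      rw [Matrix.transpose_mul, Matrix.transpose_mul, Matrix.transpose_transpose, hPsymm,
        Matrix.mul_assoc]
    have e5 : (Yᵀ * (Pmat * Fv)).trace = (Fvᵀ * (Pmat * Y)).trace := by
      rw [← Matrix.trace_transpose (Yᵀ * (Pmat * Fv))]
      rw [Matrix.transpose_mul, Matrix.transpose_mul, Matrix.transpose_transpose, hPsymm,
        Matrix.mul_assoc]
    have expandA : ∀ M : Matrix (Fin n) (Fin n) ℝ,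
        (Mᵀ * (A * M)).trace = η * (Mᵀ * (Pmat * M)).trace + (Mᵀ * (L * M)).trace := by
      intro M
      rw [hAdef, Matrix.add_mul, Matrix.mul_add, Matrix.trace_add, Matrix.smul_mul,
        Matrix.mul_smul, Matrix.trace_smul]
      simp
    -- expand G F and G Fv
    have hGF : G F = (η/2) * ((Fᵀ * (Pmat * F)).trace - 2 * (Fᵀ * (Pmat * Y)).trace
        + (Yᵀ * (Pmat * Y)).trace) + (1/2) * (Fᵀ * (L * F)).trace := by
      rw [hG]
      simp only [Matrix.transpose_sub, Matrix.sub_mul, Matrix.mul_sub,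
        Matrix.trace_sub, Matrix.mul_assoc]
      rw [e4]
      ring
    have hGFv : G Fv = (η/2) * ((Fvᵀ * (Pmat * Fv)).trace - 2 * (Fvᵀ * (Pmat * Y)).trace
        + (Yᵀ * (Pmat * Y)).trace) + (1/2) * (Fvᵀ * (L * Fv)).trace := by
      rw [hG]
      simp only [Matrix.transpose_sub, Matrix.sub_mul, Matrix.mul_sub,
        Matrix.trace_sub, Matrix.mul_assoc]
      rw [e5]
      ring
    have hquad : ((F - Fv)ᵀ * A * (F - Fv)).trace
        = (Fᵀ * (A * F)).trace - 2 * (Fᵀ * (A * Fv)).trace + (Fvᵀ * (A * Fv)).trace := by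
      simp only [Matrix.transpose_sub, Matrix.sub_mul, Matrix.mul_sub,
        Matrix.trace_sub, Matrix.mul_assoc]
      rw [e2]
      ring
    rw [hGF, hGFv, hquad, expandA F, expandA Fv, e1]
    have e3' := e3
    rw [expandA Fv] at e3'
    linarith [e3']
  constructor
  · intro F
    have := key F
    have h1 := tr_nonneg (F - Fv)
    linarith
  · intro F hF
    have := key F
    have h0 : ((F - Fv)ᵀ * A * (F - Fv)).trace = 0 := by linarith
    have := tr_zero (F - Fv) h0
    exact sub_eq_zero.1 this
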